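/- Let I be an MA 2 instance that admits at least one MA 2-feasible hub set. For a task t = (b,b') ∈ τ, call a pair (h,h') ∈ H × H valid for t if (b,h) ∈ E_BH, (h,h') ∈ E_HH and (b',h') ∈ E_BH, and let m(t) be the minimum of cost({h,h'}) over pairs valid for t. Then the union over t ∈ τ of pairs attaining m(t) is an MA 2-feasible set S with cost(S) ≤ Σ_{t∈τ} m(t) ≤ |τ| · OPT ≤ |B|² · OPT. -/

import Mathlib

/-!
STATEMENT 2: In an MA 2 instance admitting a feasible hub set, choosing for each task a
cheapest valid hub pair (w.r.t. the edge sets `E_BH`, `E_HH`) and opening all chosen hubs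
yields an MA 2-feasible set `S` with `cost S ≤ Σ_{t∈τ} m t ≤ |τ| · OPT ≤ |B|² · OPT`.
-/

/-- A hub set `S` is MA 2-feasible if every task can be routed along existing edges
through one or two open hubs. -/
def MA2Feasible {B H : Type*} (EBH : Set (B × H)) (EHH : Set (H × H))
    (τ : Finset (B × B)) (S : Finset H) : Prop :=
  ∀ t ∈ τ, ∃ h ∈ S, ∃ h' ∈ S, (t.1, h) ∈ EBH ∧ (h, h') ∈ EHH ∧ (t.2, h') ∈ EBH

/-- Total opening cost of a hub set. -/
def cost {H : Type*} (c : H → ℝ) (S : Finset H) : ℝ := ∑ h ∈ S, c h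

lemma sum_biUnion_le' {ι α : Type*} [DecidableEq α] (f : α → ℝ) (hf : ∀ a, 0 ≤ f a)
    (s : Finset ι) (g : ι → Finset α) :
    ∑ a ∈ s.biUnion g, f a ≤ ∑ i ∈ s, ∑ a ∈ g i, f a := by
  classical
  induction s using Finset.induction_on with
  | empty => simp
  | insert _ _ hx ih =>
    rename_i i s
    rw [Finset.biUnion_insert, Finset.sum_insert hx]
    calc ∑ a ∈ g i ∪ s.biUnion g, f a
        ≤ ∑ a ∈ g i, f a + ∑ a ∈ (s.biUnion g) \ g i, f a := by
          rw [← Finset.sum_union Finset.disjoint_sdiff, Finset.union_sdiff_self_eq_union]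
      _ ≤ ∑ a ∈ g i, f a + ∑ a ∈ s.biUnion g, f a := by
          have := Finset.sum_le_sum_of_subset_of_nonneg (f := f)
            (Finset.sdiff_subset (s := s.biUnion g) (t := g i)) (fun a _ _ => hf a)
          linarith
      _ ≤ _ := by linarith

theorem stmt2 {B H : Type*} [Fintype B] [Fintype H] [DecidableEq H]
    (c : H → ℝ) (hc : ∀ h, 0 ≤ c h)
    (EBH : Set (B × H)) (EHH : Set (H × H))
    (hEHHsym : ∀ h h', (h, h') ∈ EHH → (h', h) ∈ EHH)
    (hEHHloop : ∀ h, (h, h) ∈ EHH)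
    (τ : Finset (B × B))
    (hfeas : ∃ S : Finset H, MA2Feasible EBH EHH τ S)
    (m : B × B → ℝ)
    (hm : ∀ t ∈ τ, IsLeast
      {x : ℝ | ∃ h h' : H,
        ((t.1, h) ∈ EBH ∧ (h, h') ∈ EHH ∧ (t.2, h') ∈ EBH) ∧ x = cost c {h, h'}} (m t))
    (p : B × B → H × H)
    (hpvalid : ∀ t ∈ τ,
      (t.1, (p t).1) ∈ EBH ∧ ((p t).1, (p t).2) ∈ EHH ∧ (t.2, (p t).2) ∈ EBH)
    (hpmin : ∀ t ∈ τ, cost c {(p t).1, (p t).2} = m t)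
    (OPT : ℝ)
    (hOPT : IsLeast {x : ℝ | ∃ S : Finset H, MA2Feasible EBH EHH τ S ∧ x = cost c S} OPT) :
    MA2Feasible EBH EHH τ (τ.biUnion fun t => {(p t).1, (p t).2}) ∧
      cost c (τ.biUnion fun t => {(p t).1, (p t).2}) ≤ ∑ t ∈ τ, m t ∧
      ∑ t ∈ τ, m t ≤ (τ.card : ℝ) * OPT ∧
      (τ.card : ℝ) * OPT ≤ ((Fintype.card B : ℝ)) ^ 2 * OPT := by
  classical
  obtain ⟨S₀, hS₀feas, hS₀cost⟩ := hOPT.1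
  have hOPTnn : 0 ≤ OPT := by
    rw [hS₀cost]; exact Finset.sum_nonneg fun h _ => hc h
  refine ⟨?_, ?_, ?_, ?_⟩
  · intro t ht
    refine ⟨(p t).1, ?_, (p t).2, ?_, hpvalid t ht⟩
    · exact Finset.mem_biUnion.2 ⟨t, ht, by simp⟩
    · exact Finset.mem_biUnion.2 ⟨t, ht, by simp⟩
  · calc cost c (τ.biUnion fun t => {(p t).1, (p t).2})
        ≤ ∑ t ∈ τ, ∑ h ∈ ({(p t).1, (p t).2} : Finset H), c h :=
          sum_biUnion_le' c hc τ _
      _ = ∑ t ∈ τ, m t := Finset.sum_congr rfl fun t ht => hpmin t ht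
  · have key : ∀ t ∈ τ, m t ≤ OPT := by
      intro t ht
      obtain ⟨h, hh, h', hh', he1, he2, he3⟩ := hS₀feas t ht
      have hmem : cost c {h, h'} ∈
          {x : ℝ | ∃ h h' : H,
            ((t.1, h) ∈ EBH ∧ (h, h') ∈ EHH ∧ (t.2, h') ∈ EBH) ∧ x = cost c {h, h'}} :=
        ⟨h, h', ⟨he1, he2, he3⟩, rfl⟩
      have h1 : m t ≤ cost c {h, h'} := (hm t ht).2 hmem
      have h2 : cost c {h, h'} ≤ cost c S₀ := by
        refine Finset.sum_le_sum_of_subset_of_nonneg ?_ (fun a _ _ => hc a)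
        intro a ha
        rcases Finset.mem_insert.1 ha with rfl | ha
        · exact hh
        · exact (Finset.mem_singleton.1 ha) ▸ hh'
      rw [hS₀cost]
      linarith
    calc ∑ t ∈ τ, m t ≤ ∑ _t ∈ τ, OPT := Finset.sum_le_sum key
      _ = (τ.card : ℝ) * OPT := by rw [Finset.sum_const, nsmul_eq_mul]
  · have hcard : (τ.card : ℝ) ≤ ((Fintype.card B : ℝ)) ^ 2 := by
      have : τ.card ≤ Fintype.card (B × B) := Finset.card_le_univ τ
      rw [Fintype.card_prod] at this
      calc (τ.card : ℝ) ≤ ((Fintype.card B * Fintype.card B : ℕ) : ℝ) := by exact_mod_cast this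
        _ = ((Fintype.card B : ℝ)) ^ 2 := by push_cast; ring
    exact mul_le_mul_of_nonneg_right hcard hOPTnn
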